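/- The lazy potential satisfies the 3-competitiveness update condition for an active request of HARMONIC with two servers: let (M,d) be a metric space and let x, y, z, r ∈ M be pairwise distinct. Then Φ(x,y,z) + 3·d(z,r) − 2·d(x,r)·d(z,r)/(d(x,r)+d(z,r)) − (d(x,r)·Φ(x,y,r) + d(z,r)·Φ(z,y,r))/(d(x,r)+d(z,r)) ≥ 0, where Φ(u,v,w) := 2·d(u,v)·(2·d(u,w)+d(v,w))/(d(u,v)+d(u,w)+d(v,w)). -/
import Mathlib

set_option maxRecDepth 16000
set_option maxHeartbeats 1600000

lemma claim2poly (a b c p q s : ℝ) (ha : 0 ≤ a) (hb : 0 ≤ b) (hc : 0 ≤ c)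
    (hp : 0 ≤ p) (hq : 0 ≤ q) (hs : 0 ≤ s)
    (t1 : a ≤ b + c) (t2 : b ≤ a + c) (t3 : c ≤ a + b)
    (t4 : a ≤ p + q) (t5 : p ≤ a + q) (t6 : q ≤ a + p)
    (t7 : b ≤ p + s) (t8 : p ≤ b + s) (t9 : s ≤ b + p)
    (t10 : c ≤ q + s) (t11 : q ≤ c + s) (t12 : s ≤ c + q) :
    0 ≤ p * ((2*a*(2*b+c))*(a+p+q) - (2*a*(2*p+q))*(a+b+c))
      + (p*s + s^2 - s*c) * ((a+b+c)*(a+p+q))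
      + s * (2*a*(2*b+c)) * (a+p+q) := by
  have habc : (0:ℝ) ≤ a + b - c := by linarith
  have hacb : (0:ℝ) ≤ a + c - b := by linarith
  have hapq : (0:ℝ) ≤ a + p - q := by linarith
  have haqp : (0:ℝ) ≤ a + q - p := by linarith
  have hbca : (0:ℝ) ≤ b + c - a := by linarith
  have hbps : (0:ℝ) ≤ b + p - s := by linarith
  have hbsp : (0:ℝ) ≤ b + s - p := by linarith
  have hcsq : (0:ℝ) ≤ c + s - q := by linarith
  have hpqa : (0:ℝ) ≤ p + q - a := by linarith
  have hpsb : (0:ℝ) ≤ p + s - b := by linarith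
  have hqsc : (0:ℝ) ≤ q + s - c := by linarith
  linarith [mul_nonneg (mul_nonneg (mul_nonneg hcsq hapq) hp) hs,
    mul_nonneg (mul_nonneg (mul_nonneg hqsc hpqa) hc) hs,
    mul_nonneg (mul_nonneg (mul_nonneg hpsb hacb) hb) hs,
    mul_nonneg (mul_nonneg (mul_nonneg hbsp habc) hp) hq,
    mul_nonneg (mul_nonneg (mul_nonneg hpsb habc) hb) hp,
    mul_nonneg (mul_nonneg (mul_nonneg hpsb habc) hp) hs,
    mul_nonneg (mul_nonneg (mul_nonneg hpsb habc) hb) hc,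
    mul_nonneg (mul_nonneg (mul_nonneg hpsb hpsb) ha) hb,
    mul_nonneg (mul_nonneg (mul_nonneg hbsp hacb) hp) hp,
    mul_nonneg (mul_nonneg (mul_nonneg hqsc hapq) hb) hb,
    mul_nonneg (mul_nonneg (mul_nonneg hqsc habc) hc) hq,
    mul_nonneg (mul_nonneg (mul_nonneg hpsb hcsq) ha) hc,
    mul_nonneg (mul_nonneg (mul_nonneg hpsb hapq) hb) hq,
    mul_nonneg (mul_nonneg (mul_nonneg hpsb hpsb) hb) hp,
    mul_nonneg (mul_nonneg (mul_nonneg hpsb hpsb) hb) hq,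
    mul_nonneg (mul_nonneg (mul_nonneg hbsp habc) hc) hp,
    mul_nonneg (mul_nonneg (mul_nonneg hbsp hacb) ha) hs,
    mul_nonneg (mul_nonneg (mul_nonneg hbsp hbps) ha) hb,
    mul_nonneg (mul_nonneg (mul_nonneg hcsq hapq) ha) hq,
    mul_nonneg (mul_nonneg (mul_nonneg hcsq habc) hc) hq,
    mul_nonneg (mul_nonneg (mul_nonneg hqsc hqsc) hb) hp,
    mul_nonneg (mul_nonneg (mul_nonneg hpsb hcsq) hc) hq,
    mul_nonneg (mul_nonneg (mul_nonneg hbsp hapq) hq) hq,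
    mul_nonneg (mul_nonneg (mul_nonneg hqsc haqp) hs) hs,
    mul_nonneg (mul_nonneg (mul_nonneg hbsp habc) ha) hs,
    mul_nonneg (mul_nonneg (mul_nonneg hcsq hapq) hb) hp,
    mul_nonneg (mul_nonneg (mul_nonneg hbsp habc) hq) hs,
    mul_nonneg (mul_nonneg (mul_nonneg hbsp hapq) hp) hq,
    mul_nonneg (mul_nonneg (mul_nonneg hqsc hpqa) ha) hp,
    mul_nonneg (mul_nonneg (mul_nonneg hbsp hpqa) ha) hc,
    mul_nonneg (mul_nonneg (mul_nonneg hqsc hbca) ha) hp,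
    mul_nonneg (mul_nonneg (mul_nonneg hqsc hapq) hp) hp,
    mul_nonneg (mul_nonneg (mul_nonneg hbsp habc) ha) hq,
    mul_nonneg (mul_nonneg (mul_nonneg hqsc habc) ha) hc,
    mul_nonneg (mul_nonneg (mul_nonneg hcsq habc) hc) hp,
    mul_nonneg (mul_nonneg (mul_nonneg hbsp hapq) ha) hq,
    mul_nonneg (mul_nonneg (mul_nonneg hbsp hpqa) ha) ha,
    mul_nonneg (mul_nonneg (mul_nonneg hqsc hqsc) hb) hs,
    mul_nonneg (mul_nonneg (mul_nonneg hqsc hapq) ha) hp,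
    mul_nonneg (mul_nonneg (mul_nonneg hpsb habc) ha) hb,
    mul_nonneg (mul_nonneg (mul_nonneg hcsq habc) hq) hq,
    mul_nonneg (mul_nonneg (mul_nonneg hpsb hbps) hb) hs,
    mul_nonneg (mul_nonneg (mul_nonneg hqsc haqp) hp) hs,
    mul_nonneg (mul_nonneg (mul_nonneg hpsb hpqa) ha) hb,
    mul_nonneg (mul_nonneg (mul_nonneg hcsq habc) hp) hp,
    mul_nonneg (mul_nonneg (mul_nonneg hcsq haqp) hp) hq,
    mul_nonneg (mul_nonneg (mul_nonneg hcsq hbps) ha) hq,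
    mul_nonneg (mul_nonneg (mul_nonneg hpsb hcsq) ha) hq,
    mul_nonneg (mul_nonneg (mul_nonneg hqsc hapq) hc) hp,
    mul_nonneg (mul_nonneg (mul_nonneg hpsb hapq) hc) hc,
    mul_nonneg (mul_nonneg (mul_nonneg hpsb hpsb) hc) hp,
    mul_nonneg (mul_nonneg (mul_nonneg hpsb hapq) ha) hq,
    mul_nonneg (mul_nonneg (mul_nonneg hcsq haqp) hp) hp,
    mul_nonneg (mul_nonneg (mul_nonneg hbsp haqp) ha) hs,
    mul_nonneg (mul_nonneg (mul_nonneg hbsp hbps) ha) hs,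
    mul_nonneg (mul_nonneg (mul_nonneg hpsb habc) hb) hq,
    mul_nonneg (mul_nonneg (mul_nonneg hqsc hbca) ha) hs,
    mul_nonneg (mul_nonneg (mul_nonneg hcsq hapq) hb) hq,
    mul_nonneg (mul_nonneg (mul_nonneg hcsq hapq) hc) hp,
    mul_nonneg (mul_nonneg (mul_nonneg hqsc hpqa) ha) hb,
    mul_nonneg (mul_nonneg (mul_nonneg hqsc habc) ha) hb,
    mul_nonneg (mul_nonneg (mul_nonneg hqsc hqsc) hc) hp,
    mul_nonneg (mul_nonneg (mul_nonneg hqsc hapq) hc) hq,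
    mul_nonneg (mul_nonneg (mul_nonneg hcsq hapq) hq) hs,
    mul_nonneg (mul_nonneg (mul_nonneg hqsc habc) hq) hq,
    mul_nonneg (mul_nonneg (mul_nonneg hqsc hapq) ha) hc,
    mul_nonneg (mul_nonneg (mul_nonneg hbsp hpsb) hc) hq,
    mul_nonneg (mul_nonneg (mul_nonneg hbsp habc) hp) hp,
    mul_nonneg (mul_nonneg (mul_nonneg hbsp hpsb) hb) hq,
    mul_nonneg (mul_nonneg (mul_nonneg hqsc hacb) hb) hb,
    mul_nonneg (mul_nonneg (mul_nonneg hbsp hapq) hc) hq,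
    mul_nonneg (mul_nonneg (mul_nonneg hpsb hapq) hs) hs,
    mul_nonneg (mul_nonneg (mul_nonneg hcsq habc) ha) hc,
    mul_nonneg (mul_nonneg (mul_nonneg hbsp habc) hp) hs,
    mul_nonneg (mul_nonneg (mul_nonneg hbsp hbsp) ha) hp,
    mul_nonneg (mul_nonneg (mul_nonneg hcsq hcsq) ha) ha,
    mul_nonneg (mul_nonneg (mul_nonneg hbsp hapq) ha) hc,
    mul_nonneg (mul_nonneg (mul_nonneg hpsb hbca) hp) hs,
    mul_nonneg (mul_nonneg (mul_nonneg hcsq hbps) ha) ha,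
    mul_nonneg (mul_nonneg (mul_nonneg hbsp hacb) ha) hb,
    mul_nonneg (mul_nonneg (mul_nonneg hbsp hapq) ha) ha]

lemma claim1 (c q s : ℝ) (hc : 0 < c) (hq : 0 < q) (hs : 0 < s)
    (h1 : c ≤ q + s) (h2 : q ≤ c + s) :
    2 * c * (2 * s + q) / (c + s + q) ≤ c + 2 * s := by
  rw [div_le_iff₀ (by linarith)]
  nlinarith [mul_nonneg (sub_nonneg.2 h1) hs.le, mul_nonneg (sub_nonneg.2 h2) hc.le]

lemma key (a b c p q s : ℝ) (ha : 0 < a) (hb : 0 < b) (hc : 0 < c)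
    (hp : 0 < p) (hq : 0 < q) (hs : 0 < s)
    (t1 : a ≤ b + c) (t2 : b ≤ a + c) (t3 : c ≤ a + b)
    (t4 : a ≤ p + q) (t5 : p ≤ a + q) (t6 : q ≤ a + p)
    (t7 : b ≤ p + s) (t8 : p ≤ b + s) (t9 : s ≤ b + p)
    (t10 : c ≤ q + s) (t11 : q ≤ c + s) (t12 : s ≤ c + q) :
    2*a*(2*b+c)/(a+b+c) + 3*s - 2*p*s/(p+s)
      - (p*(2*a*(2*p+q)/(a+p+q)) + s*(2*c*(2*s+q)/(c+s+q)))/(p+s) ≥ 0 := by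
  have hD0 : (0:ℝ) < a+b+c := by linarith
  have hD1 : (0:ℝ) < a+p+q := by linarith
  have hD2 : (0:ℝ) < c+s+q := by linarith
  have hps : (0:ℝ) < p+s := by linarith
  have h2 : 2*c*(2*s+q)/(c+s+q) ≤ c + 2*s := claim1 c q s hc hq hs t10 t11
  have hH : 0 ≤ p * ((2*a*(2*b+c))*(a+p+q) - (2*a*(2*p+q))*(a+b+c))
      + (p*s + s^2 - s*c) * ((a+b+c)*(a+p+q))
      + s * (2*a*(2*b+c)) * (a+p+q) :=
    claim2poly a b c p q s ha.le hb.le hc.le hp.le hq.le hs.le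
      t1 t2 t3 t4 t5 t6 t7 t8 t9 t10 t11 t12
  have e : 2*a*(2*b+c)/(a+b+c) + 3*s - 2*p*s/(p+s)
      - (p*(2*a*(2*p+q)/(a+p+q)) + s*(2*c*(2*s+q)/(c+s+q)))/(p+s)
      = (p * ((2*a*(2*b+c))*(a+p+q) - (2*a*(2*p+q))*(a+b+c))
          + (p*s + s^2 - s*c) * ((a+b+c)*(a+p+q))
          + s * (2*a*(2*b+c)) * (a+p+q)) / ((a+b+c)*(a+p+q)*(p+s))
        + s*((c+2*s) - 2*c*(2*s+q)/(c+s+q))/(p+s) := by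
    field_simp
    ring
  rw [ge_iff_le, e]
  have h3 : 0 ≤ s*((c+2*s) - 2*c*(2*s+q)/(c+s+q)) :=
    mul_nonneg hs.le (by linarith)
  have h4 : 0 ≤ (0:ℝ) := le_refl 0
  exact add_nonneg (div_nonneg hH (by positivity)) (div_nonneg h3 hps.le)

/-- The lazy potential for HARMONIC with two servers:
`Φ(u,v,w) = 2·d(u,v)·(2·d(u,w) + d(v,w)) / (d(u,v) + d(u,w) + d(v,w))`. -/
noncomputable def lazyPhi {M : Type*} [MetricSpace M] (u v w : M) : ℝ :=
  2 * dist u v * (2 * dist u w + dist v w) / (dist u v + dist u w + dist v w)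

/-- Update condition of the lazy potential for an active request of HARMONIC
with two servers: the algorithm's servers are at `x, z`, the adversary's at
`y, z`; the adversary moves its server from `z` to `r` and requests `r`. -/
theorem lazyPhi_active_request {M : Type*} [MetricSpace M] (x y z r : M)
    (hxy : x ≠ y) (hxz : x ≠ z) (hxr : x ≠ r)
    (hyz : y ≠ z) (hyr : y ≠ r) (hzr : z ≠ r) :
    lazyPhi x y z + 3 * dist z r
      - 2 * dist x r * dist z r / (dist x r + dist z r)
      - (dist x r * lazyPhi x y r + dist z r * lazyPhi z y r)
          / (dist x r + dist z r) ≥ 0 := by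
  have ha := dist_pos.2 hxy
  have hb := dist_pos.2 hxz
  have hc := dist_pos.2 hyz
  have hp := dist_pos.2 hxr
  have hq := dist_pos.2 hyr
  have hs := dist_pos.2 hzr
  have t1 : dist x y ≤ dist x z + dist y z := by
    have := dist_triangle x z y; rwa [dist_comm z y] at this
  have t2 : dist x z ≤ dist x y + dist y z := dist_triangle x y z
  have t3 : dist y z ≤ dist x y + dist x z := by
    have := dist_triangle y x z; rwa [dist_comm y x] at this
  have t4 : dist x y ≤ dist x r + dist y r := by
    have := dist_triangle x r y; rwa [dist_comm r y] at this
  have t5 : dist x r ≤ dist x y + dist y r := dist_triangle x y r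
  have t6 : dist y r ≤ dist x y + dist x r := by
    have := dist_triangle y x r; rwa [dist_comm y x] at this
  have t7 : dist x z ≤ dist x r + dist z r := by
    have := dist_triangle x r z; rwa [dist_comm r z] at this
  have t8 : dist x r ≤ dist x z + dist z r := dist_triangle x z r
  have t9 : dist z r ≤ dist x z + dist x r := by
    have := dist_triangle z x r; rwa [dist_comm z x] at this
  have t10 : dist y z ≤ dist y r + dist z r := by
    have := dist_triangle y r z; rwa [dist_comm r z] at this
  have t11 : dist y r ≤ dist y z + dist z r := dist_triangle y z r
  have t12 : dist z r ≤ dist y z + dist y r := by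
    have := dist_triangle z y r; rwa [dist_comm z y] at this
  have hkey := key (dist x y) (dist x z) (dist y z) (dist x r) (dist y r) (dist z r)
    ha hb hc hp hq hs t1 t2 t3 t4 t5 t6 t7 t8 t9 t10 t11 t12
  simp only [lazyPhi, dist_comm z y]
  calc 2 * dist x y * (2 * dist x z + dist y z) / (dist x y + dist x z + dist y z)
        + 3 * dist z r
        - 2 * dist x r * dist z r / (dist x r + dist z r)
        - (dist x r * (2 * dist x y * (2 * dist x r + dist y r) / (dist x y + dist x r + dist y r))
            + dist z r * (2 * dist y z * (2 * dist z r + dist y r) / (dist y z + dist z r + dist y r)))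
            / (dist x r + dist z r)
      = 2*(dist x y)*(2*(dist x z)+(dist y z))/((dist x y)+(dist x z)+(dist y z)) + 3*(dist z r)
        - 2*(dist x r)*(dist z r)/((dist x r)+(dist z r))
        - ((dist x r)*(2*(dist x y)*(2*(dist x r)+(dist y r))/((dist x y)+(dist x r)+(dist y r)))
            + (dist z r)*(2*(dist y z)*(2*(dist z r)+(dist y r))/((dist y z)+(dist z r)+(dist y r))))
            /((dist x r)+(dist z r)) := by ring
    _ ≥ 0 := hkey
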